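/- Let f : ℝ^n → ℝ be differentiable with gradient ∇f, attain its minimum value f* at a unique minimizer x*, and satisfy the PL inequality (1/2)‖∇f(x)‖² ≥ μ(f(x) − f*) for all x, with μ > 0. Let c1, c2 > 0, p1 > 2, p2 ∈ (1,2), and set α := p1/(2(p1−1)), β := p2/(2(p2−1)), p := c1(2μ)^α, q := c2(2μ)^β, T := 1/(p(1−α)) + 1/(q(β−1)). Then every differentiable solution x : ℝ → ℝ^n of the FxTS-GF dynamics, for any initial condition x(0) ∈ ℝ^n, satisfies x(t) = x* for all t ≥ T. -/

import Mathlib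

open Classical

lemma mvt_upper (F F' : ℝ → ℝ) {C a b : ℝ} (hab : a ≤ b)
    (hF : ∀ t ∈ Set.Icc a b, HasDerivAt F (F' t) t)
    (hC : ∀ t ∈ Set.Icc a b, F' t ≤ C) : F b - F a ≤ C * (b - a) := by
  refine (convex_Icc a b).image_sub_le_mul_sub_of_deriv_le
    (fun t ht => (hF t ht).continuousAt.continuousWithinAt)
    (fun t ht => ((hF t (interior_subset ht)).differentiableAt).differentiableWithinAt)
    (fun t ht => (hF t (interior_subset ht)).deriv ▸ hC t (interior_subset ht))
    a ?_ b ?_ hab <;> simp [hab]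

lemma mvt_lower (F F' : ℝ → ℝ) {C a b : ℝ} (hab : a ≤ b)
    (hF : ∀ t ∈ Set.Icc a b, HasDerivAt F (F' t) t)
    (hC : ∀ t ∈ Set.Icc a b, C ≤ F' t) : C * (b - a) ≤ F b - F a := by
  refine (convex_Icc a b).mul_sub_le_image_sub_of_le_deriv
    (fun t ht => (hF t ht).continuousAt.continuousWithinAt)
    (fun t ht => ((hF t (interior_subset ht)).differentiableAt).differentiableWithinAt)
    (fun t ht => (hF t (interior_subset ht)).deriv ▸ hC t (interior_subset ht))
    a ?_ b ?_ hab <;> simp [hab]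

lemma div_rpow_helper {N c e : ℝ} (hN : 0 < N) :
    c / N ^ e * N ^ 2 = c * N ^ (2 - e) := by
  have h2 : (N:ℝ) ^ (2:ℕ) = N ^ (2:ℝ) := by
    rw [← Real.rpow_natCast N 2]; norm_num
  rw [h2, div_mul_eq_mul_div, mul_div_assoc, ← Real.rpow_sub hN]

set_option maxHeartbeats 1000000 in
/-- Theorem 1, FxTS-GF: under the PL inequality, every solution of
the FxTS-GF dynamics reaches the unique minimizer `x*` within the fixed time
`T = 1/(p(1-α)) + 1/(q(β-1))`, independently of the initial condition. -/
theorem stmt_4 (n : ℕ) (f : EuclideanSpace ℝ (Fin n) → ℝ)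
    (f' : EuclideanSpace ℝ (Fin n) → EuclideanSpace ℝ (Fin n))
    (hgrad : ∀ y, HasGradientAt f (f' y) y)
    (xstar : EuclideanSpace ℝ (Fin n)) (fstar μ : ℝ) (hμ : 0 < μ)
    (hfstar : f xstar = fstar) (hmin : ∀ y, fstar ≤ f y)
    (huniq : ∀ y, f y = fstar → y = xstar)
    (hPL : ∀ y, μ * (f y - fstar) ≤ (1 / 2) * ‖f' y‖ ^ 2)
    (c1 c2 p1 p2 : ℝ) (hc1 : 0 < c1) (hc2 : 0 < c2)
    (hp1 : 2 < p1) (hp2 : p2 ∈ Set.Ioo (1 : ℝ) 2)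
    (α β p q T : ℝ)
    (hα : α = p1 / (2 * (p1 - 1))) (hβ : β = p2 / (2 * (p2 - 1)))
    (hpdef : p = c1 * (2 * μ) ^ α) (hqdef : q = c2 * (2 * μ) ^ β)
    (hT : T = 1 / (p * (1 - α)) + 1 / (q * (β - 1))) :
    ∀ x : ℝ → EuclideanSpace ℝ (Fin n),
      (∀ t, 0 ≤ t → HasDerivAt x
        (if f' (x t) = 0 then 0 else
          -(c1 / ‖f' (x t)‖ ^ ((p1 - 2) / (p1 - 1))) • f' (x t)
            - (c2 / ‖f' (x t)‖ ^ ((p2 - 2) / (p2 - 1))) • f' (x t)) t) →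
      ∀ t, T ≤ t → x t = xstar := by
  intro x hx
  obtain ⟨hp2a, hp2b⟩ := hp2
  have hp11 : (0:ℝ) < p1 - 1 := by linarith
  have hp21 : (0:ℝ) < p2 - 1 := by linarith
  have hα0 : 0 < α := by rw [hα]; positivity
  have hβ0 : 0 < β := by rw [hβ]; positivity
  have hα1 : α < 1 := by rw [hα, div_lt_one (by linarith)]; linarith
  have hβ1 : 1 < β := by rw [hβ, lt_div_iff₀ (by linarith)]; linarith
  have h2μ : (0:ℝ) < 2 * μ := by linarith
  have hp0 : 0 < p := hpdef ▸ mul_pos hc1 (Real.rpow_pos_of_pos h2μ α)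
  have hq0 : 0 < q := hqdef ▸ mul_pos hc2 (Real.rpow_pos_of_pos h2μ β)
  set T2 : ℝ := 1 / (p * (1 - α)) with hT2
  set T1 : ℝ := 1 / (q * (β - 1)) with hT1
  have hT2pos : 0 < T2 := one_div_pos.mpr (mul_pos hp0 (by linarith))
  have hT1pos : 0 < T1 := one_div_pos.mpr (mul_pos hq0 (by linarith))
  have hTsum : T = T2 + T1 := hT
  have hT1leT : T1 ≤ T := by rw [hTsum]; linarith
  have hT0 : 0 ≤ T := by rw [hTsum]; linarith
  set V : ℝ → ℝ := fun s => f (x s) - fstar with hVdef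
  have hV0 : ∀ s, 0 ≤ V s := fun s => sub_nonneg.2 (hmin _)
  -- the derivative of V
  set W : ℝ → ℝ := fun s => if f' (x s) = 0 then (0:ℝ) else
      -(c1 * ‖f' (x s)‖ ^ (p1 / (p1 - 1)) + c2 * ‖f' (x s)‖ ^ (p2 / (p2 - 1))) with hWdef
  have hW : ∀ s, 0 ≤ s → HasDerivAt V (W s) s := by
    intro s hs
    have hcomp := (hgrad (x s)).hasFDerivAt.comp_hasDerivAt s (hx s hs)
    have hder : HasDerivAt (fun u => f (x u))
        ((inner ℝ (f' (x s)) (if f' (x s) = 0 then 0 else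
          -(c1 / ‖f' (x s)‖ ^ ((p1 - 2) / (p1 - 1))) • f' (x s)
            - (c2 / ‖f' (x s)‖ ^ ((p2 - 2) / (p2 - 1))) • f' (x s)) : ℝ)) s := by
      exact hcomp
    have hval : (inner ℝ (f' (x s)) (if f' (x s) = 0 then 0 else
          -(c1 / ‖f' (x s)‖ ^ ((p1 - 2) / (p1 - 1))) • f' (x s)
            - (c2 / ‖f' (x s)‖ ^ ((p2 - 2) / (p2 - 1))) • f' (x s)) : ℝ) = W s := by
      by_cases hg : f' (x s) = 0
      · simp [hWdef, hg]
      · have hN : 0 < ‖f' (x s)‖ := norm_pos_iff.mpr hg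
        rw [if_neg hg, hWdef]
        simp only [if_neg hg]
        have hinner : (inner ℝ (f' (x s))
            (-(c1 / ‖f' (x s)‖ ^ ((p1 - 2) / (p1 - 1))) • f' (x s)
              - (c2 / ‖f' (x s)‖ ^ ((p2 - 2) / (p2 - 1))) • f' (x s)) : ℝ)
            = -(c1 / ‖f' (x s)‖ ^ ((p1 - 2) / (p1 - 1)) * ‖f' (x s)‖ ^ 2
                + c2 / ‖f' (x s)‖ ^ ((p2 - 2) / (p2 - 1)) * ‖f' (x s)‖ ^ 2) := by
          rw [inner_sub_right, real_inner_smul_right, real_inner_smul_right,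
            real_inner_self_eq_norm_sq]
          ring
        rw [hinner, div_rpow_helper hN, div_rpow_helper hN,
          show (2:ℝ) - (p1 - 2) / (p1 - 1) = p1 / (p1 - 1) by field_simp; ring,
          show (2:ℝ) - (p2 - 2) / (p2 - 1) = p2 / (p2 - 1) by field_simp; ring]
    exact (hval ▸ hder).sub_const fstar
  -- W is nonpositive, so V is nonincreasing on [0, ∞)
  have hWle0 : ∀ s, W s ≤ 0 := by
    intro s
    rw [hWdef]
    by_cases hg : f' (x s) = 0
    · simp [hg]
    · simp only [if_neg hg]
      have h1 : 0 ≤ c1 * ‖f' (x s)‖ ^ (p1 / (p1 - 1)) :=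
        mul_nonneg hc1.le (Real.rpow_nonneg (norm_nonneg _) _)
      have h2 : 0 ≤ c2 * ‖f' (x s)‖ ^ (p2 / (p2 - 1)) :=
        mul_nonneg hc2.le (Real.rpow_nonneg (norm_nonneg _) _)
      linarith
  have hanti : ∀ a b : ℝ, 0 ≤ a → a ≤ b → V b ≤ V a := by
    intro a b ha hab
    have h := mvt_upper V W hab (fun t ht => hW t (le_trans ha ht.1))
      (fun t _ => hWle0 t)
    rw [zero_mul] at h
    linarith
  -- Main claim: V T = 0
  have hVT : V T = 0 := by
    by_contra hne
    have hVTpos : 0 < V T := lt_of_le_of_ne (hV0 T) (Ne.symm hne)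
    have hVpos : ∀ s ∈ Set.Icc 0 T, 0 < V s := fun s hs =>
      lt_of_lt_of_le hVTpos (hanti s T hs.1 hs.2)
    have hg : ∀ s ∈ Set.Icc 0 T, f' (x s) ≠ 0 := by
      intro s hs hzero
      have h1 := hPL (x s)
      rw [hzero] at h1
      simp at h1
      have h2 : 0 < f (x s) - fstar := hVpos s hs
      nlinarith [mul_pos hμ h2]
    -- derivative bound: W s ≤ -(p * V s ^ α) - q * V s ^ β on [0, T]
    have hWb : ∀ s ∈ Set.Icc 0 T, W s ≤ -(p * V s ^ α) - q * V s ^ β := by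
      intro s hs
      have hgs := hg s hs
      have hN : 0 < ‖f' (x s)‖ := norm_pos_iff.mpr hgs
      have hVs : 0 < V s := hVpos s hs
      have hPLs : 2 * μ * V s ≤ ‖f' (x s)‖ ^ (2:ℝ) := by
        have h1 := hPL (x s)
        have h2 : (‖f' (x s)‖:ℝ) ^ (2:ℕ) = ‖f' (x s)‖ ^ (2:ℝ) := by
          rw [← Real.rpow_natCast _ 2]; norm_num
        rw [← h2]
        have h3 : V s = f (x s) - fstar := rfl
        rw [h3]
        nlinarith
      have hkey : ∀ γ : ℝ, 0 < γ → (2 * μ) ^ γ * V s ^ γ ≤ ‖f' (x s)‖ ^ (2 * γ) := by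
        intro γ hγ
        have h1 : (2 * μ * V s) ^ γ ≤ (‖f' (x s)‖ ^ (2:ℝ)) ^ γ :=
          Real.rpow_le_rpow (by positivity) hPLs hγ.le
        rw [← Real.rpow_mul (norm_nonneg _), Real.mul_rpow h2μ.le hVs.le] at h1
        exact h1
      have hk1 := hkey α hα0
      have hk2 := hkey β hβ0
      have he1 : 2 * α = p1 / (p1 - 1) := by rw [hα]; field_simp
      have he2 : 2 * β = p2 / (p2 - 1) := by rw [hβ]; field_simp
      rw [he1] at hk1
      rw [he2] at hk2
      have hm1 : p * V s ^ α ≤ c1 * ‖f' (x s)‖ ^ (p1 / (p1 - 1)) := by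
        rw [hpdef, mul_assoc]
        exact mul_le_mul_of_nonneg_left hk1 hc1.le
      have hm2 : q * V s ^ β ≤ c2 * ‖f' (x s)‖ ^ (p2 / (p2 - 1)) := by
        rw [hqdef, mul_assoc]
        exact mul_le_mul_of_nonneg_left hk2 hc2.le
      rw [hWdef]
      simp only [if_neg hgs]
      linarith
    -- Phase 1 : on [0, T1], consider G = V ^ (1 - β)
    have hVT1pos : 0 < V T1 := hVpos T1 ⟨hT1pos.le, hT1leT⟩
    have hG : ∀ s ∈ Set.Icc (0:ℝ) T,
        HasDerivAt (fun u => V u ^ (1 - β)) (W s * (1 - β) * V s ^ (1 - β - 1)) s :=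
      fun s hs => (hW s hs.1).rpow_const (Or.inl (hVpos s hs).ne')
    have hGlb : ∀ s ∈ Set.Icc (0:ℝ) T1,
        q * (β - 1) ≤ W s * (1 - β) * V s ^ (1 - β - 1) := by
      intro s hs
      have hsT : s ∈ Set.Icc (0:ℝ) T := ⟨hs.1, le_trans hs.2 hT1leT⟩
      have hVs := hVpos s hsT
      have hWs := hWb s hsT
      have hWq : W s ≤ -(q * V s ^ β) := by
        have hα' : 0 ≤ p * V s ^ α :=
          mul_nonneg hp0.le (Real.rpow_nonneg hVs.le _)
        linarith
      have h1 : (β - 1) * (q * V s ^ β) ≤ W s * (1 - β) := by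
        nlinarith [mul_le_mul_of_nonneg_left hWq (show (0:ℝ) ≤ β - 1 by linarith)]
      have hVpow : 0 < V s ^ (1 - β - 1) := Real.rpow_pos_of_pos hVs _
      have h2 : (β - 1) * (q * V s ^ β) * V s ^ (1 - β - 1)
          ≤ W s * (1 - β) * V s ^ (1 - β - 1) :=
        mul_le_mul_of_nonneg_right h1 hVpow.le
      have h3 : V s ^ β * V s ^ (1 - β - 1) = 1 := by
        rw [← Real.rpow_add hVs, show β + (1 - β - 1) = 0 by ring, Real.rpow_zero]
      have h4 : (β - 1) * (q * V s ^ β) * V s ^ (1 - β - 1) = q * (β - 1) := by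
        calc (β - 1) * (q * V s ^ β) * V s ^ (1 - β - 1)
            = q * (β - 1) * (V s ^ β * V s ^ (1 - β - 1)) := by ring
          _ = q * (β - 1) := by rw [h3, mul_one]
      linarith
    have hphase1 := mvt_lower (fun u => V u ^ (1 - β))
      (fun s => W s * (1 - β) * V s ^ (1 - β - 1)) hT1pos.le
      (fun s hs => hG s ⟨hs.1, le_trans hs.2 hT1leT⟩) hGlb
    have hqT1 : q * (β - 1) * (T1 - 0) = 1 := by
      have hne : q * (β - 1) ≠ 0 := (mul_pos hq0 (by linarith)).ne'
      rw [hT1, sub_zero, mul_one_div, div_self hne]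
    have hG0 : 0 < V 0 ^ (1 - β) :=
      Real.rpow_pos_of_pos (hVpos 0 ⟨le_refl 0, hT0⟩) _
    have hGT1 : 1 < V T1 ^ (1 - β) := by
      rw [hqT1] at hphase1
      linarith
    have hVT1lt1 : V T1 < 1 := by
      rcases (Real.one_lt_rpow_iff_of_pos hVT1pos).mp hGT1 with ⟨_, h⟩ | ⟨h, _⟩
      · linarith
      · exact h
    -- Phase 2 : on [T1, T], consider H = V ^ (1 - α)
    have hH : ∀ s ∈ Set.Icc (0:ℝ) T,
        HasDerivAt (fun u => V u ^ (1 - α)) (W s * (1 - α) * V s ^ (1 - α - 1)) s :=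
      fun s hs => (hW s hs.1).rpow_const (Or.inl (hVpos s hs).ne')
    have hHub : ∀ s ∈ Set.Icc T1 T,
        W s * (1 - α) * V s ^ (1 - α - 1) ≤ -(p * (1 - α)) := by
      intro s hs
      have hsT : s ∈ Set.Icc (0:ℝ) T := ⟨le_trans hT1pos.le hs.1, hs.2⟩
      have hVs := hVpos s hsT
      have hWs := hWb s hsT
      have hWp : W s ≤ -(p * V s ^ α) := by
        have hβ' : 0 ≤ q * V s ^ β :=
          mul_nonneg hq0.le (Real.rpow_nonneg hVs.le _)
        linarith
      have h1 : W s * (1 - α) ≤ -(p * V s ^ α) * (1 - α) :=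
        mul_le_mul_of_nonneg_right hWp (by linarith)
      have hVpow : 0 < V s ^ (1 - α - 1) := Real.rpow_pos_of_pos hVs _
      have h2 : W s * (1 - α) * V s ^ (1 - α - 1)
          ≤ -(p * V s ^ α) * (1 - α) * V s ^ (1 - α - 1) :=
        mul_le_mul_of_nonneg_right h1 hVpow.le
      have h3 : V s ^ α * V s ^ (1 - α - 1) = 1 := by
        rw [← Real.rpow_add hVs, show α + (1 - α - 1) = 0 by ring, Real.rpow_zero]
      have h4 : -(p * V s ^ α) * (1 - α) * V s ^ (1 - α - 1) = -(p * (1 - α)) := by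
        calc -(p * V s ^ α) * (1 - α) * V s ^ (1 - α - 1)
            = -(p * (1 - α)) * (V s ^ α * V s ^ (1 - α - 1)) := by ring
          _ = -(p * (1 - α)) := by rw [h3, mul_one]
      linarith
    have hphase2 := mvt_upper (fun u => V u ^ (1 - α))
      (fun s => W s * (1 - α) * V s ^ (1 - α - 1)) hT1leT
      (fun s hs => hH s ⟨le_trans hT1pos.le hs.1, hs.2⟩) hHub
    have hpT2 : -(p * (1 - α)) * (T - T1) = -1 := by
      have hTT1 : T - T1 = T2 := by rw [hTsum]; ring
      have hne : p * (1 - α) ≠ 0 := (mul_pos hp0 (by linarith)).ne'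
      rw [hTT1, hT2, mul_one_div, neg_div, div_self hne]
    have hHT1 : V T1 ^ (1 - α) < 1 :=
      Real.rpow_lt_one (hV0 T1) hVT1lt1 (by linarith)
    have hHT : 0 < V T ^ (1 - α) := Real.rpow_pos_of_pos hVTpos _
    rw [hpT2] at hphase2
    linarith
  -- conclude
  intro t htT
  have hVt : V t = 0 := le_antisymm (hVT ▸ hanti T t hT0 htT) (hV0 t)
  have hft : f (x t) = fstar := by
    have h : f (x t) - fstar = 0 := hVt
    linarith
  exact huniq _ hft
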